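/- Let A be the Cartan matrix of the affine Lie algebra D_{ℓ+1}^{(2)} (ℓ ≥ 2): the (ℓ+1)×(ℓ+1) tridiagonal matrix with diagonal 2, a_{01} = -2, a_{ℓ,ℓ-1} = -2, and all other neighboring off-diagonal entries -1. A vector ψ ∈ ℤ^{ℓ+1} satisfying ψ_0 + 2(ψ_1 + ⋯ + ψ_{ℓ-1}) + ψ_ℓ = 0 lies in the ℤ-span of the columns of A if and only if ψ_0 is even. -/

import Mathlib

/-- Stmt 2: In type `D_{ℓ+1}^{(2)}` (ℓ ≥ 2), a level-zero vector ψ lies in the ℤ-column-span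
of the Cartan matrix iff ψ₀ is even. -/
theorem stmt2 (ℓ : ℕ) (hℓ : 2 ≤ ℓ)
    (A : Matrix (Fin (ℓ + 1)) (Fin (ℓ + 1)) ℤ)
    (hA : ∀ i j : Fin (ℓ + 1), A i j =
      if i = j then 2
      else if i.val = 0 ∧ j.val = 1 then -2
      else if i.val = ℓ ∧ j.val = ℓ - 1 then -2
      else if i.val + 1 = j.val ∨ j.val + 1 = i.val then -1
      else 0)
    (ψ : Fin (ℓ + 1) → ℤ)
    (hψ : ψ 0 + 2 * (∑ i ∈ Finset.univ.filter
        (fun i : Fin (ℓ + 1) => 0 < i.val ∧ i.val < ℓ), ψ i) + ψ (Fin.last ℓ) = 0) :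
    (∃ x : Fin (ℓ + 1) → ℤ, A.mulVec x = ψ) ↔ 2 ∣ ψ 0 := by
  have hA' : ∀ i j : Fin (ℓ + 1), A i j =
      if i.val = j.val then 2
      else if i.val = 0 ∧ j.val = 1 then -2
      else if i.val = ℓ ∧ j.val = ℓ - 1 then -2
      else if i.val + 1 = j.val ∨ j.val + 1 = i.val then -1
      else 0 := by
    intro i j
    rw [hA i j]
    rcases eq_or_ne i j with rfl | h
    · simp
    · rw [if_neg h, if_neg (fun hv => h (Fin.ext hv))]
  have h1 : (1 : ℕ) < ℓ + 1 := by omega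
  have hm1 : ℓ - 1 < ℓ + 1 := by omega
  -- evaluation of rows of A.mulVec
  have hmv : ∀ (x : Fin (ℓ + 1) → ℤ) (i : Fin (ℓ + 1)),
      A.mulVec x i = ∑ j, A i j * x j := by
    intro x i
    simp [Matrix.mulVec, dotProduct]
  have row0 : ∀ x : Fin (ℓ + 1) → ℤ,
      A.mulVec x 0 = 2 * x 0 + (-2) * x ⟨1, h1⟩ := by
    intro x
    rw [hmv]
    have key : ∀ j : Fin (ℓ + 1), A 0 j * x j =
        (if j = (0 : Fin (ℓ + 1)) then 2 * x j else 0) +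
        (if j = (⟨1, h1⟩ : Fin (ℓ + 1)) then (-2) * x j else 0) := by
      intro j
      rw [hA']
      rcases j with ⟨jv, hj⟩
      simp only [Fin.ext_iff, Fin.val_zero, Fin.val_mk, true_and, and_true, or_false, false_or, and_false, false_and]
      split_ifs <;> first | ring1 | (exfalso; (try simp only [or_false, false_or, and_false, false_and] at *); all_goals omega)
    simp only [key]
    rw [Finset.sum_add_distrib]
    simp
  have rowmid : ∀ (x : Fin (ℓ + 1) → ℤ) (m : ℕ) (hm : m + 2 < ℓ + 1),
      A.mulVec x ⟨m + 1, by omega⟩ =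
        (-1) * x ⟨m, by omega⟩ + 2 * x ⟨m + 1, by omega⟩ + (-1) * x ⟨m + 2, hm⟩ := by
    intro x m hm
    rw [hmv]
    have key : ∀ j : Fin (ℓ + 1), A ⟨m + 1, by omega⟩ j * x j =
        ((if j = (⟨m, by omega⟩ : Fin (ℓ + 1)) then (-1) * x j else 0) +
         (if j = (⟨m + 1, by omega⟩ : Fin (ℓ + 1)) then 2 * x j else 0)) +
        (if j = (⟨m + 2, hm⟩ : Fin (ℓ + 1)) then (-1) * x j else 0) := by
      intro j
      rw [hA']
      rcases j with ⟨jv, hj⟩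
      simp only [Fin.ext_iff, Fin.val_mk, true_and, and_true, or_false, false_or, and_false, false_and]
      split_ifs <;> first | ring1 | (exfalso; (try simp only [or_false, false_or, and_false, false_and] at *); all_goals omega)
    simp only [key]
    rw [Finset.sum_add_distrib, Finset.sum_add_distrib]
    simp
  have rowlast : ∀ x : Fin (ℓ + 1) → ℤ,
      A.mulVec x (Fin.last ℓ) = (-2) * x ⟨ℓ - 1, hm1⟩ + 2 * x (Fin.last ℓ) := by
    intro x
    rw [hmv]
    have key : ∀ j : Fin (ℓ + 1), A (Fin.last ℓ) j * x j =
        (if j = (⟨ℓ - 1, hm1⟩ : Fin (ℓ + 1)) then (-2) * x j else 0) +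
        (if j = Fin.last ℓ then 2 * x j else 0) := by
      intro j
      rw [hA']
      rcases j with ⟨jv, hj⟩
      simp only [Fin.ext_iff, Fin.val_mk, Fin.val_last, true_and, and_true, or_false, false_or, and_false, false_and]
      split_ifs <;> first | ring1 | (exfalso; (try simp only [or_false, false_or, and_false, false_and] at *); all_goals omega)
    simp only [key]
    rw [Finset.sum_add_distrib]
    simp
  constructor
  · rintro ⟨x, rfl⟩
    rw [row0]
    exact ⟨x 0 - x ⟨1, h1⟩, by ring⟩
  · rintro ⟨c, hc⟩
    set ψ' : ℕ → ℤ := fun n => if h : n < ℓ + 1 then ψ ⟨n, h⟩ else 0 with hψ'def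
    have hψ'eq : ∀ (n : ℕ) (hn : n < ℓ + 1), ψ' n = ψ ⟨n, hn⟩ := by
      intro n hn
      simp [hψ'def, hn, show n ≤ ℓ by omega]
    set d : ℕ → ℤ := fun j => -c - ∑ k ∈ Finset.Icc 1 j, ψ' k with hddef
    set x : Fin (ℓ + 1) → ℤ := fun i => ∑ j ∈ Finset.range i.val, d j with hxdef
    have hxval : ∀ (n : ℕ) (hn : n < ℓ + 1),
        x ⟨n, hn⟩ = ∑ j ∈ Finset.range n, d j := fun n hn => rfl
    have hdiff : ∀ (n : ℕ) (hn : n + 1 < ℓ + 1),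
        x ⟨n + 1, hn⟩ = x ⟨n, by omega⟩ + d n := by
      intro n hn
      rw [hxval, hxval, Finset.sum_range_succ]
    -- the filter sum equals a sum of ψ' over Icc 1 (ℓ-1)
    have hS : (∑ i ∈ Finset.univ.filter
        (fun i : Fin (ℓ + 1) => 0 < i.val ∧ i.val < ℓ), ψ i)
        = ∑ k ∈ Finset.Icc 1 (ℓ - 1), ψ' k := by
      have e1 : (∑ i ∈ Finset.univ.filter
          (fun i : Fin (ℓ + 1) => 0 < i.val ∧ i.val < ℓ), ψ i)
          = ∑ i : Fin (ℓ + 1), (fun k => if 0 < k ∧ k < ℓ then ψ' k else 0) i.val := by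
        rw [Finset.sum_filter]
        refine Finset.sum_congr rfl ?_
        intro i _
        rcases i with ⟨iv, hi⟩
        by_cases h : 0 < iv ∧ iv < ℓ
        · simp only [h, if_true, hψ'eq iv hi]
        · simp only [h, if_false]
      rw [e1, Fin.sum_univ_eq_sum_range (fun k => if 0 < k ∧ k < ℓ then ψ' k else 0)]
      rw [← Finset.sum_filter]
      congr 1
      ext k
      simp only [Finset.mem_filter, Finset.mem_range, Finset.mem_Icc]
      omega
    refine ⟨x, ?_⟩
    funext i
    rcases i with ⟨iv, hi⟩
    rcases Nat.lt_trichotomy 0 iv with h0 | h0 | h0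
    · rcases Nat.lt_or_ge iv ℓ with hlt | hge
      · -- middle row: 1 ≤ iv < ℓ
        obtain ⟨m, rfl⟩ : ∃ m, iv = m + 1 := ⟨iv - 1, by omega⟩
        have hm2 : m + 2 < ℓ + 1 := by omega
        rw [rowmid x m hm2, hxval m (by omega), hxval (m + 1) (by omega),
          hxval (m + 2) hm2]
        have hsum2 : ∑ j ∈ Finset.range (m + 2), d j
            = ∑ j ∈ Finset.range m, d j + d m + d (m + 1) := by
          rw [show m + 2 = m + 1 + 1 by omega, Finset.sum_range_succ, Finset.sum_range_succ]
        rw [hsum2, Finset.sum_range_succ]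
        have hstep : d (m + 1) = d m - ψ' (m + 1) := by
          simp only [hddef]
          rw [Finset.sum_Icc_succ_top (by omega : 1 ≤ m + 1)]
          ring
        rw [hstep, hψ'eq (m + 1) hi]
        ring
      · -- last row: iv = ℓ
        have hivℓ : ℓ = iv := by omega
        subst hivℓ
        have hlℓ : ℓ < ℓ + 1 := by omega
        have hlast : (⟨ℓ, hi⟩ : Fin (ℓ + 1)) = Fin.last ℓ := rfl
        rw [hlast, rowlast, hxval (ℓ - 1) hm1]
        have hxl : x (Fin.last ℓ) = ∑ j ∈ Finset.range ℓ, d j := hxval ℓ hlℓ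
        rw [hxl]
        have hr := Finset.sum_range_succ d (ℓ - 1)
        rw [show ℓ - 1 + 1 = ℓ by omega] at hr
        rw [hr]
        have hd : d (ℓ - 1) = -c - ∑ k ∈ Finset.Icc 1 (ℓ - 1), ψ' k := by
          simp only [hddef]
        rw [hd]
        rw [hS, hc] at hψ
        linarith
    · -- iv = 0
      subst h0
      have h00 : (⟨0, hi⟩ : Fin (ℓ + 1)) = 0 := rfl
      rw [h00, row0]
      have hx0 : x 0 = 0 := by
        rw [show (0 : Fin (ℓ + 1)) = ⟨0, hi⟩ from rfl, hxval]
        simp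
      have hx1 : x ⟨1, h1⟩ = d 0 := by
        rw [hxval]
        simp
      have hd0 : d 0 = -c := by
        simp [hddef, Finset.Icc_eq_empty (by omega : ¬ (1:ℕ) ≤ 0)]
      rw [hx0, hx1, hd0, hc]
      ring
    · exfalso; omega
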